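/- For α ∈ [0,1], the spectrum of A_α(l(K_{n,n})) consists of 2n−2 with multiplicity 1, n(α+1)−2 with multiplicity 2n−2, and 2αn−2 with multiplicity n² −2n + 1. -/

import Mathlib

open Matrix SimpleGraph Finset

noncomputable def Aalpha {V : Type*} [Fintype V] (α : ℝ) (G : SimpleGraph V) : Matrix V V ℝ :=
  letI := Classical.decEq V
  letI : DecidableRel G.Adj := Classical.decRel _
  α • Matrix.diagonal (fun v => (G.degree v : ℝ)) + (1 - α) • G.adjMatrix ℝ

noncomputable instance edgeSetFintype {V : Type*} [Fintype V] (G : SimpleGraph V) :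
    Fintype G.edgeSet :=
  Set.Finite.fintype (Set.toFinite _)

open scoped Classical in
noncomputable def incB {V : Type*} [Fintype V] (G : SimpleGraph V) : Matrix V G.edgeSet ℝ :=
  fun v e => if v ∈ (e : Sym2 V) then 1 else 0

noncomputable def edgeDegSum {V : Type*} [Fintype V] (G : SimpleGraph V) (e : Sym2 V) : ℝ :=
  letI := Classical.decEq V
  letI : DecidableRel G.Adj := Classical.decRel _
  Sym2.lift ⟨fun a b => (G.degree a : ℝ) + (G.degree b : ℝ), fun a b => by ring⟩ e


open Polynomial
open scoped Kronecker

variable {m : ℕ}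

noncomputable def Qm (m : ℕ) : Matrix (Fin (m+1)) (Fin (m+1)) ℝ :=
  fun i j => if j = 0 then 1 else if i = 0 then 1 else if i = j then -1 else 0

noncomputable def Rm (m : ℕ) : Matrix (Fin (m+1)) (Fin (m+1)) ℝ :=
  fun i j => (1/(m+1) : ℝ) - (if i = j ∧ i ≠ 0 then 1 else 0)

noncomputable def Am (m : ℕ) : Matrix (Fin (m+1)) (Fin (m+1)) ℝ := fun i j => if i = j then 0 else 1

noncomputable def lam (m : ℕ) (i : Fin (m+1)) : ℝ := if i = 0 then (m : ℝ) else -1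

lemma Qm_row_sum (i : Fin (m+1)) : ∑ a, Qm m i a = if i = 0 then (m+1 : ℝ) else 0 := by
  rcases eq_or_ne i 0 with rfl | hi
  · simp [Qm]
  · rw [if_neg hi]
    rw [Finset.sum_eq_add_of_mem 0 i (mem_univ _) (mem_univ _) (Ne.symm hi)]
    · simp [Qm, hi]
    · intro k _ hk
      simp only [Qm]
      rw [if_neg hk.1, if_neg hi, if_neg (fun h : i = k => hk.2 h.symm)]

lemma Qm_col_sum (j : Fin (m+1)) : ∑ a, Qm m a j = if j = 0 then (m+1 : ℝ) else 0 := by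
  rcases eq_or_ne j 0 with rfl | hj
  · simp [Qm]
  · rw [if_neg hj]
    rw [Finset.sum_eq_add_of_mem 0 j (mem_univ _) (mem_univ _) (Ne.symm hj)]
    · simp [Qm, hj]
    · intro k _ hk
      simp only [Qm]
      rw [if_neg hj, if_neg hk.1, if_neg hk.2]

lemma QR : Qm m * Rm m = 1 := by
  ext i j
  simp only [Matrix.mul_apply, Rm, mul_sub, Finset.sum_sub_distrib]
  have h1 : ∑ a, Qm m i a * (1/(m+1) : ℝ) = (∑ a, Qm m i a) * (1/(m+1) : ℝ) := by
    rw [Finset.sum_mul]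
  rw [h1, Qm_row_sum]
  have h2 : ∑ a, Qm m i a * (if a = j ∧ a ≠ 0 then 1 else 0)
      = if j ≠ 0 then Qm m i j else 0 := by
    rcases eq_or_ne j 0 with rfl | hj
    · simp
    · rw [if_pos hj, Finset.sum_eq_single j]
      · simp [hj]
      · intro b _ hb; simp [hb]
      · simp
  rw [h2]
  rcases eq_or_ne i 0 with rfl | hi
  · rcases eq_or_ne j 0 with rfl | hj
    · have : ((m:ℝ)+1) ≠ 0 := by positivity
      field_simp [Matrix.one_apply]
      simp
    · simp [hj, Qm, Matrix.one_apply, Ne.symm hj]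
      have : ((m:ℝ)+1) ≠ 0 := by positivity
      field_simp
      norm_num
  · rw [if_neg hi, zero_mul]
    rcases eq_or_ne j 0 with rfl | hj
    · simp [Matrix.one_apply, hi]
    · rcases eq_or_ne i j with rfl | hij
      · simp [Qm, hi, hj, Matrix.one_apply]
      · simp [hj, Qm, hi, hij, Matrix.one_apply, Ne.symm hj]

lemma AQ : Am m * Qm m = Qm m * Matrix.diagonal (lam m) := by
  ext i j
  have hA : ∀ a, Am m i a = 1 - (if i = a then 1 else 0) := by
    intro a; simp [Am]; split_ifs <;> norm_num
  rw [Matrix.mul_diagonal]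
  simp only [Matrix.mul_apply]
  calc ∑ a, Am m i a * Qm m a j = ∑ a, (Qm m a j - (if i = a then 1 else 0) * Qm m a j) := by
        refine Finset.sum_congr rfl fun a _ => ?_
        rw [hA a]; ring
    _ = (∑ a, Qm m a j) - Qm m i j := by
        rw [Finset.sum_sub_distrib]
        congr 1
        rw [Finset.sum_eq_single i] <;> simp +contextual [eq_comm]
    _ = Qm m i j * lam m j := by
        rw [Qm_col_sum]
        rcases eq_or_ne j 0 with rfl | hj
        · simp only [lam, Qm, if_pos rfl, if_true, eq_self_iff_true]; ring
        · simp only [if_neg hj, lam, if_neg hj, zero_sub]; ring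


noncomputable def dval (m : ℕ) (α : ℝ) (p : Fin (m+1) × Fin (m+1)) : ℝ :=
  α * (2*m) + (1-α) * (lam m p.1 + lam m p.2)

noncomputable def Nmat (m : ℕ) (α : ℝ) : Matrix (Fin (m+1) × Fin (m+1)) (Fin (m+1) × Fin (m+1)) ℝ :=
  (α * (2*m)) • 1 + (1-α) • (Am m ⊗ₖ (1 : Matrix (Fin (m+1)) (Fin (m+1)) ℝ) + (1 : Matrix (Fin (m+1)) (Fin (m+1)) ℝ) ⊗ₖ Am m)

lemma diag_kron : (Matrix.diagonal (lam m)) ⊗ₖ (1 : Matrix (Fin (m+1)) (Fin (m+1)) ℝ)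
    + (1 : Matrix (Fin (m+1)) (Fin (m+1)) ℝ) ⊗ₖ (Matrix.diagonal (lam m))
    = Matrix.diagonal (fun p => lam m p.1 + lam m p.2) := by
  rw [← Matrix.diagonal_one, Matrix.diagonal_kronecker_diagonal, Matrix.diagonal_kronecker_diagonal,
    Matrix.diagonal_add]
  ext p; simp

lemma NP_eq_PD (α : ℝ) : Nmat m α * (Qm m ⊗ₖ Qm m) = (Qm m ⊗ₖ Qm m) * Matrix.diagonal (dval m α) := by
  have hd : Matrix.diagonal (dval m α) = (α * (2*m)) • 1
      + (1-α) • Matrix.diagonal (fun p : Fin (m+1) × Fin (m+1) => lam m p.1 + lam m p.2) := by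
    ext p q
    by_cases h : p = q
    · subst h
      simp [dval, Matrix.one_apply]
    · simp [Matrix.diagonal_apply_ne _ h, Matrix.one_apply_ne h]
  rw [Nmat, hd]
  rw [Matrix.add_mul, Matrix.mul_add, Matrix.smul_mul, Matrix.mul_smul, Matrix.smul_mul,
    Matrix.mul_smul, Matrix.one_mul, Matrix.mul_one]
  congr 2
  rw [Matrix.add_mul, ← diag_kron, Matrix.mul_add]
  rw [← Matrix.mul_kronecker_mul, ← Matrix.mul_kronecker_mul, ← Matrix.mul_kronecker_mul,
    ← Matrix.mul_kronecker_mul, AQ, Matrix.one_mul, Matrix.mul_one]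

lemma PRkron : (Qm m ⊗ₖ Qm m) * (Rm m ⊗ₖ Rm m) = 1 := by
  rw [← Matrix.mul_kronecker_mul, QR, Matrix.one_kronecker_one]

open Polynomial in
lemma charpoly_conj {k : Type*} [Fintype k] [DecidableEq k]
    (P R M : Matrix k k ℝ) (hPR : P * R = 1) : (P * M * R).charpoly = M.charpoly := by
  have hmapPR : P.map (C : ℝ →+* ℝ[X]) * R.map C = 1 := by
    rw [← Matrix.map_mul, hPR, Matrix.map_one _ (map_zero _) (map_one _)]
  have hscalar : (Matrix.diagonal (fun _ : k => (X : ℝ[X]))) = (X : ℝ[X]) • (1 : Matrix k k ℝ[X]) := by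
    ext i j
    by_cases h : i = j
    · subst h; simp
    · simp [Matrix.diagonal_apply_ne _ h, Matrix.one_apply_ne h]
  have hcm : charmatrix (P * M * R) = P.map (C : ℝ →+* ℝ[X]) * charmatrix M * R.map C := by
    unfold charmatrix
    rw [Matrix.mul_sub, Matrix.sub_mul]
    congr 1
    · rw [Matrix.scalar_apply, hscalar, mul_smul_comm, smul_mul_assoc, Matrix.mul_one, hmapPR]
    · simp only [RingHom.mapMatrix_apply]
      rw [Matrix.map_mul, Matrix.map_mul]
  have hdet : (P.map (C : ℝ →+* ℝ[X])).det * (R.map C).det = 1 := by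
    rw [← Matrix.det_mul, hmapPR, Matrix.det_one]
  rw [Matrix.charpoly, hcm, Matrix.det_mul, Matrix.det_mul, mul_right_comm, hdet, one_mul]
  rfl

open Polynomial in
lemma charpoly_Nmat (α : ℝ) : (Nmat m α).charpoly = (Matrix.diagonal (dval m α)).charpoly := by
  have hRP : Rm m ⊗ₖ Rm m * (Qm m ⊗ₖ Qm m) = 1 :=
    mul_eq_one_comm.mp PRkron
  have hN : Nmat m α = (Qm m ⊗ₖ Qm m) * Matrix.diagonal (dval m α) * (Rm m ⊗ₖ Rm m) := by
    calc Nmat m α = Nmat m α * ((Qm m ⊗ₖ Qm m) * (Rm m ⊗ₖ Rm m)) := by rw [PRkron, Matrix.mul_one]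
      _ = (Nmat m α * (Qm m ⊗ₖ Qm m)) * (Rm m ⊗ₖ Rm m) := by rw [Matrix.mul_assoc]
      _ = (Qm m ⊗ₖ Qm m) * Matrix.diagonal (dval m α) * (Rm m ⊗ₖ Rm m) := by rw [NP_eq_PD]
  rw [hN, charpoly_conj _ _ _ PRkron]

open Polynomial in
lemma charpoly_diag_roots {k : Type*} [Fintype k] [DecidableEq k] (d : k → ℝ) :
    (Matrix.diagonal d).charpoly.roots = (Finset.univ.val.map d) := by
  have h1 : charmatrix (Matrix.diagonal d) = Matrix.diagonal (fun i => (X : ℝ[X]) - C (d i)) := by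
    ext i j
    by_cases h : i = j
    · subst h; rw [charmatrix_apply_eq, Matrix.diagonal_apply_eq, Matrix.diagonal_apply_eq]
    · rw [charmatrix_apply_ne _ _ _ h, Matrix.diagonal_apply_ne _ h, Matrix.diagonal_apply_ne _ h,
        map_zero, neg_zero]
  rw [Matrix.charpoly, h1, Matrix.det_diagonal]
  have h2 : ∏ i : k, ((X : ℝ[X]) - C (d i)) = ((Finset.univ.val.map d).map (fun a => (X : ℝ[X]) - C a)).prod := by
    rw [Multiset.map_map]
    rfl
  rw [h2, Polynomial.roots_multiset_prod_X_sub_C]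

lemma multiset_eq (α : ℝ) :
    ((Finset.univ : Finset (Fin (m+1) × Fin (m+1))).val.map (dval m α)) =
      {(2*(m:ℝ))} + Multiset.replicate (2*m) (((m:ℝ)+1)*(α+1)-2)
        + Multiset.replicate (m*m) (2*α*((m:ℝ)+1)-2) := by
  classical
  set u := (Finset.univ : Finset (Fin (m+1) × Fin (m+1))).val with hu
  set z : Fin (m+1) × Fin (m+1) := (0, 0) with hz
  have hsplit1 : u = u.filter (fun x => x = z) + u.filter (fun x => ¬ x = z) :=
    (Multiset.filter_add_not _ _).symm
  have hsplit2 : u.filter (fun x => ¬ x = z) =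
      (u.filter (fun x => ¬ x = z)).filter (fun x => x.1 = 0 ∨ x.2 = 0)
      + (u.filter (fun x => ¬ x = z)).filter (fun x => ¬ (x.1 = 0 ∨ x.2 = 0)) :=
    (Multiset.filter_add_not _ _).symm
  set s1 := u.filter (fun x => x = z)
  set s2 := (u.filter (fun x => ¬ x = z)).filter (fun x => x.1 = 0 ∨ x.2 = 0) with hs2
  set s3 := (u.filter (fun x => ¬ x = z)).filter (fun x => ¬ (x.1 = 0 ∨ x.2 = 0)) with hs3
  have hus : u = s1 + s2 + s3 := by rw [hsplit1, hsplit2, add_assoc]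
  -- s1
  have hs1 : s1 = {z} := by
    have : s1 = Multiset.replicate (u.count z) z := Multiset.filter_eq' _ _
    rw [this, Multiset.count_eq_one_of_mem (Finset.univ.nodup) (Finset.mem_univ z)]
    rfl
  -- s3 card
  have hs3' : s3 = u.filter (fun x => ¬ x.1 = 0 ∧ ¬ x.2 = 0) := by
    rw [hs3, Multiset.filter_filter]
    apply Multiset.filter_congr
    intro x _
    constructor
    · rintro ⟨h1, h2⟩
      push_neg at h1
      exact h1
    · rintro ⟨h1, h2⟩
      refine ⟨by push_neg; exact ⟨h1, h2⟩, ?_⟩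
      intro hxz
      exact h1 (by rw [hxz])
  have hcard3 : Multiset.card s3 = m * m := by
    rw [hs3']
    have : u.filter (fun x => ¬ x.1 = 0 ∧ ¬ x.2 = 0)
        = ((Finset.univ.filter (fun x : Fin (m+1) × Fin (m+1) => ¬ x.1 = 0 ∧ ¬ x.2 = 0)) : Finset _).val := by
      rw [Finset.filter_val]
    rw [this]
    have h2 : (Finset.univ.filter (fun x : Fin (m+1) × Fin (m+1) => ¬ x.1 = 0 ∧ ¬ x.2 = 0))
        = (Finset.univ.filter (fun i : Fin (m+1) => ¬ i = 0)) ×ˢ (Finset.univ.filter (fun i : Fin (m+1) => ¬ i = 0)) := by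
      ext x
      simp only [Finset.mem_filter, Finset.mem_product, Finset.mem_univ, true_and]
    have h3 : (Finset.univ.filter (fun i : Fin (m+1) => ¬ i = 0)).card = m := by
      have : (Finset.univ.filter (fun i : Fin (m+1) => ¬ i = 0)) = Finset.univ.erase 0 := by
        ext x; simp [Finset.mem_erase, and_comm]
      rw [this, Finset.card_erase_of_mem (Finset.mem_univ _), Finset.card_univ, Fintype.card_fin]
      omega
    show (Finset.univ.filter (fun x : Fin (m+1) × Fin (m+1) => ¬ x.1 = 0 ∧ ¬ x.2 = 0)).card = m * m
    rw [h2, Finset.card_product, h3]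
  have hcardu : Multiset.card u = (m+1) * (m+1) := by
    show Finset.univ.card = _
    rw [Finset.card_univ]
    simp [Fintype.card_prod]
  have hcard2 : Multiset.card s2 = 2 * m := by
    have := congrArg Multiset.card hus
    rw [Multiset.card_add, Multiset.card_add, hcardu, hcard3, hs1] at this
    simp only [Multiset.card_singleton] at this
    have hr : (m+1)*(m+1) = m*m + 2*m + 1 := by ring
    omega
  -- now map
  rw [hus, Multiset.map_add, Multiset.map_add, hs1]
  congr 1
  · congr 1
    · rw [Multiset.map_singleton]
      have : dval m α z = 2*(m:ℝ) := by
        simp [dval, hz, lam]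
        ring
      rw [this]
    · rw [Multiset.eq_replicate]
      refine ⟨by rw [Multiset.card_map, hcard2], ?_⟩
      intro b hb
      obtain ⟨x, hx, rfl⟩ := Multiset.mem_map.mp hb
      rw [hs2, Multiset.mem_filter, Multiset.mem_filter] at hx
      obtain ⟨⟨_, hxz⟩, hor⟩ := hx
      rcases hor with h1 | h2
      · have h2' : ¬ x.2 = 0 := by
          intro h2
          exact hxz (Prod.ext h1 h2)
        simp only [dval, lam, if_pos h1, if_neg h2']
        ring
      · have h1' : ¬ x.1 = 0 := by
          intro h1
          exact hxz (Prod.ext h1 h2)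
        simp only [dval, lam, if_neg h1', if_pos h2]
        ring
  · rw [Multiset.eq_replicate]
    refine ⟨by rw [Multiset.card_map, hcard3], ?_⟩
    intro b hb
    obtain ⟨x, hx, rfl⟩ := Multiset.mem_map.mp hb
    rw [hs3', Multiset.mem_filter] at hx
    obtain ⟨_, h1, h2⟩ := hx
    simp only [dval, lam, if_neg h1, if_neg h2]
    ring

noncomputable def fEdge (m : ℕ) (p : Fin (m+1) × Fin (m+1)) :
    (completeBipartiteGraph (Fin (m+1)) (Fin (m+1))).edgeSet :=
  ⟨s(Sum.inl p.1, Sum.inr p.2), by simp [completeBipartiteGraph]⟩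

lemma fEdge_inj : Function.Injective (fEdge m) := by
  rintro ⟨i, j⟩ ⟨k, l⟩ h
  replace h : s(Sum.inl i, Sum.inr j) = (s(Sum.inl k, Sum.inr l) : Sym2 (Fin (m+1) ⊕ Fin (m+1))) :=
    congrArg Subtype.val h
  simp only [fEdge, Subtype.mk.injEq, Sym2.eq_iff, Sym2.rel_iff', Prod.mk.injEq, Prod.swap_prod_mk] at h
  rcases h with ⟨h1, h2⟩ | ⟨h1, h2⟩
  · simp only [Sum.inl.injEq] at h1
    simp only [Sum.inr.injEq] at h2
    simp [h1, h2]
  · exact absurd h1 (by simp)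

lemma fEdge_surj : Function.Surjective (fEdge m) := by
  rintro ⟨e, he⟩
  induction e with
  | _ a b =>
    rw [SimpleGraph.mem_edgeSet] at he
    rcases a with i | i <;> rcases b with j | j
    · simp [completeBipartiteGraph] at he
    · exact ⟨(i, j), rfl⟩
    · exact ⟨(j, i), Subtype.ext (Sym2.eq_swap)⟩
    · simp [completeBipartiteGraph] at he

lemma fEdge_bij : Function.Bijective (fEdge m) := ⟨fEdge_inj, fEdge_surj⟩

lemma adj_fEdge (p q : Fin (m+1) × Fin (m+1)) :
    (completeBipartiteGraph (Fin (m+1)) (Fin (m+1))).lineGraph.Adj (fEdge m p) (fEdge m q)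
      ↔ p ≠ q ∧ (p.1 = q.1 ∨ p.2 = q.2) := by
  rw [SimpleGraph.lineGraph_adj_iff_exists]
  constructor
  · rintro ⟨hne, v, hv1, hv2⟩
    refine ⟨fun h => hne (by rw [h]), ?_⟩
    simp only [fEdge, Sym2.mem_iff] at hv1 hv2
    rcases hv1 with rfl | rfl <;> rcases hv2 with h | h <;>
      simp_all
  · rintro ⟨hne, h | h⟩
    · exact ⟨fun hc => hne (fEdge_inj hc), Sum.inl p.1, by simp [fEdge], by simp [fEdge, h]⟩
    · exact ⟨fun hc => hne (fEdge_inj hc), Sum.inr p.2, by simp [fEdge], by simp [fEdge, h]⟩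

lemma card_filter_adj (p : Fin (m+1) × Fin (m+1)) :
    (Finset.univ.filter (fun q => p ≠ q ∧ (p.1 = q.1 ∨ p.2 = q.2))).card = 2*m := by
  classical
  have hset : Finset.univ.filter (fun q : Fin (m+1) × Fin (m+1) => p ≠ q ∧ (p.1 = q.1 ∨ p.2 = q.2))
      = ({p.1} ×ˢ (Finset.univ.erase p.2)) ∪ ((Finset.univ.erase p.1) ×ˢ {p.2}) := by
    ext ⟨a, b⟩
    simp only [Finset.mem_filter, Finset.mem_univ, true_and, Finset.mem_union, Finset.mem_product,
      Finset.mem_singleton, Finset.mem_erase, Ne, Prod.ext_iff, not_and]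
    constructor
    · rintro ⟨hne, h | h⟩
      · rcases eq_or_ne b p.2 with rfl | hb
        · exact absurd rfl (hne h)
        · exact Or.inl ⟨h.symm, fun hb' => hb hb', trivial⟩
      · rcases eq_or_ne a p.1 with rfl | ha
        · exact absurd h (hne rfl)
        · exact Or.inr ⟨⟨fun h' => ha h', trivial⟩, h.symm⟩
    · rintro (⟨h1, h2, -⟩ | ⟨⟨h1, -⟩, h2⟩)
      · exact ⟨fun hp1 hp2 => h2 hp2.symm, Or.inl h1.symm⟩
      · exact ⟨fun hp1 hp2 => h1 hp1.symm, Or.inr h2.symm⟩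
  rw [hset, Finset.card_union_of_disjoint, Finset.card_product, Finset.card_product]
  · simp only [Finset.card_singleton, Finset.card_erase_of_mem (Finset.mem_univ _),
      Finset.card_univ, Fintype.card_fin]
    omega
  · rw [Finset.disjoint_left]
    rintro ⟨a, b⟩ hab hab'
    simp only [Finset.mem_product, Finset.mem_singleton, Finset.mem_erase] at hab hab'
    exact hab.2.1 hab'.2

lemma deg_fEdge (p : Fin (m+1) × Fin (m+1))
    [Fintype ((completeBipartiteGraph (Fin (m+1)) (Fin (m+1))).lineGraph.neighborSet (fEdge m p))] :
    (completeBipartiteGraph (Fin (m+1)) (Fin (m+1))).lineGraph.degree (fEdge m p) = 2*m := by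
  classical
  rw [← SimpleGraph.card_neighborSet_eq_degree]
  have e : {q : Fin (m+1) × Fin (m+1) // p ≠ q ∧ (p.1 = q.1 ∨ p.2 = q.2)} ≃
      ((completeBipartiteGraph (Fin (m+1)) (Fin (m+1))).lineGraph.neighborSet (fEdge m p)) :=
    (Equiv.ofBijective (fEdge m) fEdge_bij).subtypeEquiv (fun q => by
      rw [SimpleGraph.mem_neighborSet]
      exact (adj_fEdge p q).symm)
  rw [← Fintype.card_congr e, Fintype.card_subtype, card_filter_adj]


lemma entry_eq (α : ℝ) (p q : Fin (m+1) × Fin (m+1)) :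
    Aalpha α (completeBipartiteGraph (Fin (m+1)) (Fin (m+1))).lineGraph (fEdge m p) (fEdge m q)
      = Nmat m α p q := by
  classical
  have hAm : ∀ a : Fin (m+1), Am m a a = 0 := fun a => if_pos rfl
  have hAm' : ∀ a b : Fin (m+1), a ≠ b → Am m a b = 1 := fun a b h => if_neg h
  rcases eq_or_ne p q with rfl | hpq
  · simp only [Aalpha, Nmat, Matrix.add_apply, Matrix.smul_apply, Matrix.diagonal_apply_eq,
      SimpleGraph.adjMatrix_apply, Matrix.one_apply_eq, Matrix.kroneckerMap_apply, smul_eq_mul,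
      hAm, if_neg (SimpleGraph.irrefl _), deg_fEdge p]
    push_cast
    ring
  · have hfpq : fEdge m p ≠ fEdge m q := fun h => hpq (fEdge_inj h)
    simp only [Aalpha, Nmat, Matrix.add_apply, Matrix.smul_apply,
      SimpleGraph.adjMatrix_apply, Matrix.one_apply_ne hpq,
      Matrix.kroneckerMap_apply, smul_eq_mul]
    simp only [Matrix.diagonal, Matrix.of_apply, hfpq, if_false, ite_false]
    by_cases h1 : p.1 = q.1
    · have h2 : p.2 ≠ q.2 := fun h2 => hpq (Prod.ext h1 h2)
      rw [if_pos ((adj_fEdge p q).mpr ⟨hpq, Or.inl h1⟩), h1, hAm, Matrix.one_apply_ne h2,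
        Matrix.one_apply_eq, hAm' _ _ h2]
      ring
    · by_cases h2 : p.2 = q.2
      · rw [if_pos ((adj_fEdge p q).mpr ⟨hpq, Or.inr h2⟩), h2, hAm' _ _ h1, Matrix.one_apply_eq,
          Matrix.one_apply_ne h1, hAm]
        ring
      · rw [if_neg, hAm' _ _ h1, Matrix.one_apply_ne h2, Matrix.one_apply_ne h1, hAm' _ _ h2]
        · ring
        · rw [adj_fEdge]
          rintro ⟨-, h | h⟩
          exacts [h1 h, h2 h]

theorem stmt14 (n : ℕ) (hn : 1 ≤ n) (α : ℝ) (hα : α ∈ Set.Icc (0:ℝ) 1) :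
    (Aalpha α ((completeBipartiteGraph (Fin n) (Fin n)).lineGraph)).charpoly.roots =
      {(2 * (n : ℝ) - 2)} + Multiset.replicate (2 * n - 2) ((n : ℝ) * (α + 1) - 2) +
        Multiset.replicate (n ^ 2 + 1 - 2 * n) (2 * α * (n : ℝ) - 2) := by
  obtain ⟨m, rfl⟩ : ∃ m, n = m + 1 := ⟨n - 1, by omega⟩
  classical
  set e : (Fin (m+1) × Fin (m+1)) ≃ (completeBipartiteGraph (Fin (m+1)) (Fin (m+1))).edgeSet :=
    Equiv.ofBijective (fEdge m) fEdge_bij with he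
  have hsub : Matrix.reindex e.symm e.symm
      (Aalpha α (completeBipartiteGraph (Fin (m+1)) (Fin (m+1))).lineGraph) = Nmat m α := by
    ext p q
    rw [Matrix.reindex_apply, Matrix.submatrix_apply, Equiv.symm_symm]
    exact entry_eq α p q
  have hcp : (Aalpha α (completeBipartiteGraph (Fin (m+1)) (Fin (m+1))).lineGraph).charpoly
      = (Nmat m α).charpoly := by
    rw [← hsub, Matrix.charpoly_reindex]
  rw [hcp, charpoly_Nmat, charpoly_diag_roots, multiset_eq]
  have e1 : (2 * (m + 1) - 2 : ℕ) = 2 * m := by omega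
  have e2 : ((m + 1) ^ 2 + 1 - 2 * (m + 1) : ℕ) = m * m := by
    have : (m + 1) ^ 2 = m * m + 2 * m + 1 := by ring
    omega
  have v1 : (2 * ((m+1 : ℕ) : ℝ) - 2) = 2 * (m : ℝ) := by push_cast; ring
  have v2 : (((m+1 : ℕ) : ℝ) * (α + 1) - 2) = ((m : ℝ) + 1) * (α + 1) - 2 := by push_cast; ring
  have v3 : (2 * α * ((m+1 : ℕ) : ℝ) - 2) = 2 * α * ((m : ℝ) + 1) - 2 := by push_cast; ring
  rw [e1, e2, v1, v2, v3]
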